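/- Let G be a finite group, ρ: G → GL(V) a representation on a finite-dimensional complex vector space V, and e_1, …, e_n ∈ G elements whose product e_1⋯e_n lies in the commutator subgroup of G (equivalently, there exist g ≥ 0 and a_1,b_1,…,a_g,b_g ∈ G with a_1b_1a_1^{-1}b_1^{-1}⋯a_gb_ga_g^{-1}b_g^{-1} = e_1⋯e_n). Then the sum ∑_{j=1}^n age(ρ(e_j)) is an integer. -/

import Mathlib

open Polynomial

/-- The age of a linear endomorphism of a finite-dimensional complex vector space:
the sum, over the roots of its characteristic polynomial (with multiplicity), of the
unique representative in `[0,1)` of `arg z / (2π)` modulo `1`.  For an automorphism `g`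
of finite order `s`, whose eigenvalues are `e^{2π√-1 l_k / s}` with `l_k ∈ {0,…,s-1}`,
this equals `(l_1 + ⋯ + l_N)/s`. -/
noncomputable def age {V : Type*} [AddCommGroup V] [Module ℂ V] [FiniteDimensional ℂ V]
    (g : V →ₗ[ℂ] V) : ℝ :=
  ((LinearMap.charpoly g).roots.map fun z =>
    if 0 ≤ z.arg then z.arg / (2 * Real.pi) else z.arg / (2 * Real.pi) + 1).sum

lemma exp_multiset_sum (s : Multiset ℂ) : Complex.exp s.sum = (s.map Complex.exp).prod := by
  induction s using Multiset.induction with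
  | empty => simp
  | cons a s ih => simp [Complex.exp_add, ih]

/-- For `z ≠ 0`, `exp (2πi · f z) = z / |z|` where `f z` is the fractional representative
of `arg z / (2π)`. -/
lemma exp_frac (z : ℂ) (hz : z ≠ 0) :
    Complex.exp (2 * Real.pi * Complex.I *
      ((if 0 ≤ z.arg then z.arg / (2 * Real.pi) else z.arg / (2 * Real.pi) + 1 : ℝ) : ℂ)) =
      z * ((‖z‖ : ℝ) : ℂ)⁻¹ := by
  have hπ : (Real.pi : ℂ) ≠ 0 := by exact_mod_cast Real.pi_ne_zero
  have key : Complex.exp (2 * Real.pi * Complex.I * ((z.arg / (2 * Real.pi) : ℝ) : ℂ)) =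
      z * ((‖z‖ : ℝ) : ℂ)⁻¹ := by
    have h1 : (2 * Real.pi * Complex.I * ((z.arg / (2 * Real.pi) : ℝ) : ℂ)) =
        (z.arg : ℂ) * Complex.I := by
      push_cast
      field_simp
    rw [h1]
    have := Complex.norm_mul_exp_arg_mul_I z
    have habs : ((‖z‖ : ℝ) : ℂ) ≠ 0 := by
      exact_mod_cast (norm_ne_zero_iff.mpr hz)
    field_simp
    linear_combination this
  split_ifs with h
  · exact key
  · push_cast
    rw [mul_add, Complex.exp_add, mul_one]
    rw [show ((2 : ℂ) * Real.pi * Complex.I) = 2 * Real.pi * Complex.I by ring,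
      Complex.exp_two_pi_mul_I, mul_one]
    push_cast at key ⊢
    exact key

/-- `exp (2πi · age g)` times a positive real equals `det g`, when `det g ≠ 0`. -/
theorem exp_age {V : Type*} [AddCommGroup V] [Module ℂ V] [FiniteDimensional ℂ V]
    (g : V →ₗ[ℂ] V) (hg : LinearMap.det g ≠ 0) :
    ∃ r : ℝ, 0 < r ∧
      Complex.exp (2 * Real.pi * Complex.I * (age g : ℂ)) * (r : ℂ) = LinearMap.det g := by
  classical
  set s := (LinearMap.charpoly g).roots with hs
  have hdet : LinearMap.det g = s.prod := by
    rw [hs, LinearMap.charpoly_def,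
      ← Matrix.det_eq_prod_roots_charpoly ((LinearMap.toMatrix _ _) g),
      LinearMap.det_toMatrix]
  have hroots : ∀ z ∈ s, z ≠ 0 := by
    intro z hzs hz0
    apply hg
    rw [hdet]
    exact Multiset.prod_eq_zero (hz0 ▸ hzs)
  refine ⟨(s.map (fun z => ‖z‖)).prod, ?_, ?_⟩
  · apply Multiset.prod_pos
    intro a ha
    obtain ⟨z, hz, rfl⟩ := Multiset.mem_map.mp ha
    exact norm_pos_iff.mpr (hroots z hz)
  · have hcast : ((age g : ℝ) : ℂ) =
        (s.map (fun z => ((if 0 ≤ z.arg then z.arg / (2 * Real.pi)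
          else z.arg / (2 * Real.pi) + 1 : ℝ) : ℂ))).sum := by
      unfold age
      rw [← hs]
      rw [show ((Multiset.sum _ : ℝ) : ℂ) = Complex.ofRealHom (Multiset.sum _) from rfl,
        map_multiset_sum, Multiset.map_map]
      simp [Function.comp]
    rw [hcast, ← Multiset.sum_map_mul_left, exp_multiset_sum, Multiset.map_map]
    have hmap : (s.map ((fun z => Complex.exp z) ∘ fun z =>
        2 * Real.pi * Complex.I * ((if 0 ≤ z.arg then z.arg / (2 * Real.pi)
          else z.arg / (2 * Real.pi) + 1 : ℝ) : ℂ))) =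
        s.map (fun z => z * ((‖z‖ : ℝ) : ℂ)⁻¹) := by
      apply Multiset.map_congr rfl
      intro z hz
      exact exp_frac z (hroots z hz)
    rw [hmap]
    have hofreal : ((((s.map (fun z => ‖z‖)).prod : ℝ)) : ℂ) =
        (s.map (fun z => ((‖z‖ : ℝ) : ℂ))).prod := by
      rw [show ((Multiset.prod _ : ℝ) : ℂ) = Complex.ofRealHom (Multiset.prod _) from rfl,
        map_multiset_prod, Multiset.map_map]
      rfl
    rw [hofreal, ← Multiset.prod_map_mul]
    have : (s.map (fun z => z * ((‖z‖ : ℝ) : ℂ)⁻¹ * ((‖z‖ : ℝ) : ℂ))) =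
        s.map id := by
      apply Multiset.map_congr rfl
      intro z hz
      have habs : ((‖z‖ : ℝ) : ℂ) ≠ 0 := by
        exact_mod_cast (norm_ne_zero_iff.mpr (hroots z hz))
      field_simp
      rfl
    rw [this, Multiset.map_id, hdet]

/-- Let `G` be a finite group, `ρ : G → GL(V)` a representation on a finite-dimensional
complex vector space, and `e_1, …, e_n ∈ G` elements whose product lies in the commutator
subgroup of `G`. Then `∑_{j=1}^n age(ρ(e_j))` is an integer. -/
theorem sum_age_mem_int {V : Type*} [AddCommGroup V] [Module ℂ V] [FiniteDimensional ℂ V]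
    {G : Type*} [Group G] [Finite G] (ρ : Representation ℂ G V)
    (n : ℕ) (e : Fin n → G) (he : (List.ofFn e).prod ∈ commutator G) :
    ∃ k : ℤ, ∑ j, age (ρ (e j)) = (k : ℝ) := by
  classical
  -- the determinant of ρ g is nonzero, as ρ g is invertible
  have hdet_ne : ∀ g : G, LinearMap.det (ρ g) ≠ 0 := by
    intro g hzero
    have h1 : LinearMap.det (ρ g) * LinearMap.det (ρ g⁻¹) = 1 := by
      rw [← map_mul, ← map_mul, mul_inv_cancel, map_one, map_one]
    rw [hzero, zero_mul] at h1
    exact zero_ne_one h1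
  -- the determinant of the product is 1 (commutator maps to 1 in the abelian group ℂˣ)
  have hφ : LinearMap.det (ρ ((List.ofFn e).prod)) = 1 := by
    set φ : G →* ℂˣ :=
      (Units.map (LinearMap.det : (V →ₗ[ℂ] V) →* ℂ)).comp ρ.asGroupHom with hφdef
    have hker := Abelianization.commutator_subset_ker φ he
    have h1 : φ ((List.ofFn e).prod) = 1 := hker
    have h2 : (φ ((List.ofFn e).prod) : ℂ) = LinearMap.det (ρ ((List.ofFn e).prod)) := by
      simp [hφdef, Representation.asGroupHom_apply]
    rw [h1] at h2
    exact h2.symm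
  -- product of the per-element determinants
  have hprod : ∏ j, LinearMap.det (ρ (e j)) = 1 := by
    have : LinearMap.det (ρ ((List.ofFn e).prod)) = ∏ j, LinearMap.det (ρ (e j)) := by
      rw [map_list_prod, map_list_prod]
      simp [List.map_map, List.map_ofFn, List.prod_ofFn, Function.comp]
    rw [← this, hφ]
  -- choose the positive real factors
  choose r hr hexp using fun j => exp_age (ρ (e j)) (hdet_ne (e j))
  have hR : (0 : ℝ) < ∏ j, r j := Finset.prod_pos (fun j _ => hr j)
  have hmain : Complex.exp (2 * Real.pi * Complex.I * ((∑ j, age (ρ (e j)) : ℝ) : ℂ)) *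
      ((∏ j, r j : ℝ) : ℂ) = 1 := by
    push_cast
    rw [Finset.mul_sum, Complex.exp_sum, ← Finset.prod_mul_distrib]
    rw [← hprod]
    apply Finset.prod_congr rfl
    intro j _
    exact hexp j
  set S : ℝ := ∑ j, age (ρ (e j)) with hS
  -- the absolute value of the exponential is 1, so ∏ r j = 1
  have habs : ‖Complex.exp (2 * Real.pi * Complex.I * (S : ℂ))‖ = 1 := by
    rw [Complex.norm_exp]
    have : (2 * Real.pi * Complex.I * (S : ℂ)).re = 0 := by
      simp [Complex.mul_re, Complex.mul_im]
    rw [this, Real.exp_zero]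
  have hRone : (∏ j, r j) = 1 := by
    have := congrArg (fun w : ℂ => ‖w‖) hmain
    rw [norm_mul, habs, one_mul, norm_one, Complex.norm_real, Real.norm_eq_abs, abs_of_pos hR] at this
    exact this
  rw [hRone] at hmain
  push_cast at hmain
  rw [mul_one] at hmain
  rw [Complex.exp_eq_one_iff] at hmain
  obtain ⟨k, hk⟩ := hmain
  refine ⟨k, ?_⟩
  have h2πI : (2 * (Real.pi : ℂ) * Complex.I) ≠ 0 := Complex.two_pi_I_ne_zero
  have : (S : ℂ) = (k : ℂ) := by
    have hk' : (2 * (Real.pi : ℂ) * Complex.I) * (S : ℂ) =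
        (2 * (Real.pi : ℂ) * Complex.I) * (k : ℂ) := by
      rw [hk]; ring
    exact mul_left_cancel₀ h2πI hk'
  exact_mod_cast this
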